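/- Let f(x) = 1/(t + log x) with t > -log N for a positive integer N. Then for every integer k ≥ N, (1/24)f''(k+1) < ∫_k^{k+1} f(x) dx - f(k + 1/2) < (1/24)f''(k), where f''(x) = 1/(x^2(t+log x)^2) + 2/(x^2(t+log x)^3). -/

import Mathlib

open Real Filter MeasureTheory Set

noncomputable def ff (t x : ℝ) : ℝ := 1 / (t + Real.log x)
noncomputable def ff' (t x : ℝ) : ℝ := -(x * (t + Real.log x) ^ 2)⁻¹
noncomputable def ff'' (t x : ℝ) : ℝ :=
  1 / (x ^ 2 * (t + Real.log x) ^ 2) + 2 / (x ^ 2 * (t + Real.log x) ^ 3)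

lemma hd1 {t x : ℝ} (hx : 0 < x) (hu : 0 < t + Real.log x) :
    HasDerivAt (ff t) (ff' t x) x := by
  have h1 : HasDerivAt (fun y => t + Real.log y) x⁻¹ x :=
    (Real.hasDerivAt_log hx.ne').const_add t
  have h2 := h1.inv hu.ne'
  have he : ff t = fun y => (t + Real.log y)⁻¹ := by
    funext y; simp [ff, one_div]
  rw [he]
  refine h2.congr_deriv ?_
  unfold ff'
  field_simp

lemma hd2 {t x : ℝ} (hx : 0 < x) (hu : 0 < t + Real.log x) :
    HasDerivAt (ff' t) (ff'' t x) x := by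
  have h1 : HasDerivAt (fun y => t + Real.log y) x⁻¹ x :=
    (Real.hasDerivAt_log hx.ne').const_add t
  have hg : HasDerivAt (fun y => y * (t + Real.log y) ^ 2)
      (1 * (t + Real.log x) ^ 2 + x * ((2 : ℕ) * (t + Real.log x) ^ (2 - 1) * x⁻¹)) x :=
    (hasDerivAt_id x).mul (h1.pow 2)
  have hne : x * (t + Real.log x) ^ 2 ≠ 0 := by positivity
  have h2 := (hg.inv hne).neg
  refine h2.congr_deriv ?_
  unfold ff''
  have hx' := hx.ne'
  have hu' := hu.ne'
  field_simp
  ring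

lemma ff''_lt {t a b : ℝ} (ha : 0 < a) (hua : 0 < t + Real.log a) (hab : a < b) :
    ff'' t b < ff'' t a := by
  have hb : 0 < b := ha.trans hab
  have hlog : Real.log a < Real.log b := Real.log_lt_log ha hab
  have hub : 0 < t + Real.log b := by linarith
  have h2 : a ^ 2 * (t + Real.log a) ^ 2 < b ^ 2 * (t + Real.log b) ^ 2 := by
    apply mul_lt_mul'' <;> nlinarith
  have h3 : a ^ 2 * (t + Real.log a) ^ 3 < b ^ 2 * (t + Real.log b) ^ 3 := by
    have hcube : (t + Real.log a) ^ 3 < (t + Real.log b) ^ 3 :=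
      pow_lt_pow_left₀ (by linarith) hua.le (by norm_num)
    apply mul_lt_mul'' (by nlinarith) hcube (by positivity) (by positivity)
  unfold ff''
  have p2 : (0:ℝ) < a ^ 2 * (t + Real.log a) ^ 2 := by positivity
  have p3 : (0:ℝ) < a ^ 2 * (t + Real.log a) ^ 3 := by positivity
  exact add_lt_add (div_lt_div_of_pos_left one_pos p2 h2)
    (div_lt_div_of_pos_left (by norm_num) p3 h3)

lemma contOn_ff {t A B : ℝ} (hA : 0 < A) (huA : 0 < t + Real.log A) :
    ContinuousOn (ff t) (Icc A B) := fun y hy => by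
  have h1 : 0 < y := hA.trans_le hy.1
  have h2 : 0 < t + Real.log y :=
    huA.trans_le (by linarith [Real.log_le_log hA hy.1])
  exact (hd1 h1 h2).continuousAt.continuousWithinAt

lemma contOn_ff' {t A B : ℝ} (hA : 0 < A) (huA : 0 < t + Real.log A) :
    ContinuousOn (ff' t) (Icc A B) := fun y hy => by
  have h1 : 0 < y := hA.trans_le hy.1
  have h2 : 0 < t + Real.log y :=
    huA.trans_le (by linarith [Real.log_le_log hA hy.1])
  exact (hd2 h1 h2).continuousAt.continuousWithinAt

/-- Taylor with Lagrange remainder at order 2, expansion point `c`, for `x > c`. -/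
lemma taylor_right {t c x : ℝ} (hc : 0 < c) (huc : 0 < t + Real.log c) (hcx : c < x) :
    ∃ d ∈ Ioo c x,
      ff t x - ff t c - ff' t c * (x - c) = ff'' t d / 2 * (x - c) ^ 2 := by
  have key : ∀ y, c ≤ y → 0 < y ∧ 0 < t + Real.log y := fun y hy =>
    ⟨hc.trans_le hy, huc.trans_le (by linarith [Real.log_le_log hc hy])⟩
  have hGc : ContinuousOn (fun s => ff t s - ff' t c * s) (Icc c x) :=
    (contOn_ff hc huc).sub (continuousOn_const.mul continuousOn_id)
  have hFc : ContinuousOn (fun s => (s - c) ^ 2) (Icc c x) := by fun_prop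
  obtain ⟨e, he, heq⟩ := exists_ratio_hasDerivAt_eq_ratio_slope
    (fun s => (s - c) ^ 2) (fun s => 2 * (s - c)) hcx hFc
    (fun s _ => by
      simpa using (((hasDerivAt_id s).sub_const c).fun_pow 2))
    (fun s => ff t s - ff' t c * s) (fun s => ff' t s - ff' t c) hGc
    (fun s hs => ((hd1 (key s hs.1.le).1 (key s hs.1.le).2).sub
      ((hasDerivAt_id s).const_mul (ff' t c))).congr_deriv (by ring))
  obtain ⟨d, hd, hdeq⟩ := exists_hasDerivAt_eq_slope (ff' t) (ff'' t) he.1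
    (contOn_ff' (key c le_rfl).1 (key c le_rfl).2)
    (fun s hs => hd2 (key s hs.1.le).1 (key s hs.1.le).2)
  refine ⟨d, ⟨hd.1, hd.2.trans he.2⟩, ?_⟩
  have hec : e - c ≠ 0 := sub_ne_zero.2 (ne_of_gt he.1)
  have h1 : ff' t e - ff' t c = ff'' t d * (e - c) := by
    field_simp at hdeq; linarith [hdeq]
  rw [h1] at heq
  have h2 : (ff t x - ff' t c * x - (ff t c - ff' t c * c)) * (2 * (e - c))
      = ((x - c) ^ 2 - (c - c) ^ 2) * (ff'' t d * (e - c)) := heq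
  have h2e : (2:ℝ) * (e - c) ≠ 0 := by
    simp [sub_ne_zero.2 (ne_of_gt he.1)]
  apply mul_right_cancel₀ h2e
  linear_combination h2

/-- Taylor with Lagrange remainder at order 2, expansion point `c`, for `x < c`. -/
lemma taylor_left {t c x : ℝ} (hx : 0 < x) (hux : 0 < t + Real.log x) (hxc : x < c) :
    ∃ d ∈ Ioo x c,
      ff t x - ff t c - ff' t c * (x - c) = ff'' t d / 2 * (x - c) ^ 2 := by
  have key : ∀ y, x ≤ y → 0 < y ∧ 0 < t + Real.log y := fun y hy =>
    ⟨hx.trans_le hy, hux.trans_le (by linarith [Real.log_le_log hx hy])⟩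
  have hGc : ContinuousOn (fun s => ff t s - ff' t c * s) (Icc x c) :=
    (contOn_ff hx hux).sub (continuousOn_const.mul continuousOn_id)
  have hFc : ContinuousOn (fun s => (s - c) ^ 2) (Icc x c) := by fun_prop
  obtain ⟨e, he, heq⟩ := exists_ratio_hasDerivAt_eq_ratio_slope
    (fun s => (s - c) ^ 2) (fun s => 2 * (s - c)) hxc hFc
    (fun s _ => by
      simpa using (((hasDerivAt_id s).sub_const c).fun_pow 2))
    (fun s => ff t s - ff' t c * s) (fun s => ff' t s - ff' t c) hGc
    (fun s hs => ((hd1 (key s hs.1.le).1 (key s hs.1.le).2).sub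
      ((hasDerivAt_id s).const_mul (ff' t c))).congr_deriv (by ring))
  obtain ⟨d, hd, hdeq⟩ := exists_hasDerivAt_eq_slope (ff' t) (ff'' t) he.2
    (contOn_ff' (key e he.1.le).1 (key e he.1.le).2)
    (fun s hs => hd2 (key s (he.1.le.trans hs.1.le)).1 (key s (he.1.le.trans hs.1.le)).2)
  refine ⟨d, ⟨he.1.trans hd.1, hd.2⟩, ?_⟩
  have hec : c - e ≠ 0 := sub_ne_zero.2 (ne_of_lt he.2).symm
  have h1 : ff' t c - ff' t e = ff'' t d * (c - e) := by
    field_simp at hdeq; linarith [hdeq]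
  have h2 : (ff t c - ff' t c * c - (ff t x - ff' t c * x)) * (2 * (e - c))
      = ((c - c) ^ 2 - (x - c) ^ 2) * (ff' t e - ff' t c) := heq
  have h2e : (2:ℝ) * (e - c) ≠ 0 := by
    simp [sub_ne_zero.2 (ne_of_lt he.2)]
  apply mul_right_cancel₀ h2e
  have h1' : ff' t e - ff' t c = ff'' t d * (e - c) := by linarith [h1]
  rw [h1'] at h2
  linear_combination -h2

set_option maxHeartbeats 1000000 in
theorem stmt_12 (N : ℕ) (hN : 0 < N) (t : ℝ) (ht : -Real.log N < t)
    (k : ℕ) (hk : N ≤ k) :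
    (1/24) * (1 / (((k : ℝ) + 1)^2 * (t + Real.log ((k : ℝ) + 1))^2) +
        2 / (((k : ℝ) + 1)^2 * (t + Real.log ((k : ℝ) + 1))^3)) <
      (∫ x in (k : ℝ)..((k : ℝ) + 1), 1 / (t + Real.log x)) -
        1 / (t + Real.log ((k : ℝ) + 1/2)) ∧
    (∫ x in (k : ℝ)..((k : ℝ) + 1), 1 / (t + Real.log x)) -
        1 / (t + Real.log ((k : ℝ) + 1/2)) <
      (1/24) * (1 / ((k : ℝ)^2 * (t + Real.log (k : ℝ))^2) +
        2 / ((k : ℝ)^2 * (t + Real.log (k : ℝ))^3)) := by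
  set K : ℝ := (k : ℝ) with hKdef
  have hK1 : (1:ℝ) ≤ K := by
    have h : 1 ≤ k := hN.trans_le hk
    rw [hKdef]; exact_mod_cast h
  have hKpos : (0:ℝ) < K := lt_of_lt_of_le one_pos hK1
  have hNpos : (0:ℝ) < (N:ℝ) := by exact_mod_cast hN
  have huK : 0 < t + Real.log K := by
    have hlog : Real.log (N:ℝ) ≤ Real.log K := Real.log_le_log hNpos (by rw [hKdef]; exact_mod_cast hk)
    linarith
  set m : ℝ := K + 1/2 with hmdef
  have hKm : K < m := by rw [hmdef]; linarith
  have hm1 : m < K + 1 := by rw [hmdef]; linarith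
  have hmpos : 0 < m := hKpos.trans hKm
  have hum : 0 < t + Real.log m :=
    huK.trans_le (by linarith [Real.log_le_log hKpos hKm.le])
  have huK1 : 0 < t + Real.log (K + 1) :=
    huK.trans_le (by linarith [Real.log_le_log hKpos (by linarith : K ≤ K + 1)])
  -- positivity/log conditions for points in [K, K+1]
  have hpt : ∀ y : ℝ, K ≤ y → 0 < y ∧ 0 < t + Real.log y := fun y hy =>
    ⟨hKpos.trans_le hy, huK.trans_le (by linarith [Real.log_le_log hKpos hy])⟩
  -- the remainder function
  set g : ℝ → ℝ := fun x => ff t x - (ff t m + ff' t m * (x - m)) with hgdef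
  have hcont : ContinuousOn (ff t) (Icc K (K + 1)) := contOn_ff hKpos huK
  have hpoly : Continuous fun x : ℝ => ff t m + ff' t m * (x - m) := by continuity
  have hffInt : ∀ {a b : ℝ}, K ≤ a → b ≤ K + 1 → a ≤ b →
      IntervalIntegrable (ff t) volume a b := fun {a b} ha hb hab =>
    ((hcont.mono (Icc_subset_Icc ha hb)).intervalIntegrable_of_Icc hab)
  have hgInt : ∀ {a b : ℝ}, K ≤ a → b ≤ K + 1 → a ≤ b →
      IntervalIntegrable g volume a b := fun {a b} ha hb hab =>
    (hffInt ha hb hab).sub (hpoly.intervalIntegrable a b)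
  -- integral identity
  have hzero : (∫ x in K..(K + 1), (x - m)) = 0 := by
    rw [intervalIntegral.integral_comp_sub_right (fun u => u) m]
    rw [integral_id]
    rw [hmdef]; ring
  have hIdent : (∫ x in K..(K + 1), ff t x) - ff t m = ∫ x in K..(K + 1), g x := by
    rw [hgdef]
    rw [intervalIntegral.integral_sub (hffInt le_rfl le_rfl (by linarith))
      (hpoly.intervalIntegrable _ _)]
    have : (∫ x in K..(K + 1), (ff t m + ff' t m * (x - m)))
        = ff t m := by
      rw [intervalIntegral.integral_add (intervalIntegrable_const)
        ((continuous_const.fun_mul (by continuity)).intervalIntegrable _ _),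
        intervalIntegral.integral_const_mul, hzero,
        intervalIntegral.integral_const]
      simp
    rw [this]
  -- ∫ (x-m)^2 = 1/12
  have hsq : (∫ x in K..(K + 1), (x - m) ^ 2) = 1 / 12 := by
    rw [intervalIntegral.integral_comp_sub_right (fun u => u ^ 2) m]
    have e1 : K - m = -(1/2) := by rw [hmdef]; ring
    have e2 : K + 1 - m = 1/2 := by rw [hmdef]; ring
    rw [e1, e2, integral_pow]
    norm_num
  have hsqInt : ∀ a b : ℝ, IntervalIntegrable (fun x => (x - m) ^ 2) volume a b :=
    fun a b => (by continuity : Continuous fun x : ℝ => (x - m) ^ 2).intervalIntegrable a b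
  -- upper bound
  have hupper : (∫ x in K..(K + 1), g x) < ff'' t K / 24 := by
    have h1 : 0 < ∫ x in K..m, (ff'' t K / 2 * (x - m) ^ 2 - g x) := by
      apply intervalIntegral.intervalIntegral_pos_of_pos_on
        (((hsqInt K m).const_mul _).sub (hgInt le_rfl hm1.le hKm.le))
      · intro x hx
        obtain ⟨hxp, hux⟩ := hpt x hx.1.le
        obtain ⟨d, hd, heq⟩ := taylor_left hxp hux hx.2
        have hgx : g x = ff'' t d / 2 * (x - m) ^ 2 := by
          rw [hgdef]; simp only; linarith [heq]
        have hlt : ff'' t d < ff'' t K := ff''_lt hKpos huK (hx.1.trans hd.1)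
        have hsq' : 0 < (x - m) ^ 2 := by
          have : x - m ≠ 0 := sub_ne_zero.2 (ne_of_lt hx.2)
          positivity
        rw [hgx]
        have hrw : ff'' t K / 2 * (x - m) ^ 2 - ff'' t d / 2 * (x - m) ^ 2
            = (ff'' t K - ff'' t d) / 2 * (x - m) ^ 2 := by ring
        rw [hrw]
        exact mul_pos (by linarith : (0:ℝ) < (ff'' t K - ff'' t d) / 2) hsq'
      · exact hKm
    have h2 : 0 < ∫ x in m..(K + 1), (ff'' t K / 2 * (x - m) ^ 2 - g x) := by
      apply intervalIntegral.intervalIntegral_pos_of_pos_on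
        (((hsqInt m (K + 1)).const_mul _).sub (hgInt hKm.le le_rfl hm1.le))
      · intro x hx
        obtain ⟨d, hd, heq⟩ := taylor_right hmpos hum hx.1
        have hgx : g x = ff'' t d / 2 * (x - m) ^ 2 := by
          rw [hgdef]; simp only; linarith [heq]
        have hlt : ff'' t d < ff'' t K := ff''_lt hKpos huK (hKm.trans hd.1)
        have hsq' : 0 < (x - m) ^ 2 := by
          have : x - m ≠ 0 := sub_ne_zero.2 (ne_of_gt hx.1)
          positivity
        rw [hgx]
        have hrw : ff'' t K / 2 * (x - m) ^ 2 - ff'' t d / 2 * (x - m) ^ 2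
            = (ff'' t K - ff'' t d) / 2 * (x - m) ^ 2 := by ring
        rw [hrw]
        exact mul_pos (by linarith : (0:ℝ) < (ff'' t K - ff'' t d) / 2) hsq'
      · exact hm1
    have hsplit : (∫ x in K..m, (ff'' t K / 2 * (x - m) ^ 2 - g x))
        + (∫ x in m..(K + 1), (ff'' t K / 2 * (x - m) ^ 2 - g x))
        = ∫ x in K..(K + 1), (ff'' t K / 2 * (x - m) ^ 2 - g x) :=
      intervalIntegral.integral_add_adjacent_intervals
        (((hsqInt K m).const_mul _).sub (hgInt le_rfl hm1.le hKm.le))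
        (((hsqInt m (K + 1)).const_mul _).sub (hgInt hKm.le le_rfl hm1.le))
    have htot : 0 < ∫ x in K..(K + 1), (ff'' t K / 2 * (x - m) ^ 2 - g x) := by
      rw [← hsplit]; linarith
    rw [intervalIntegral.integral_sub ((hsqInt K (K + 1)).const_mul _)
      (hgInt le_rfl le_rfl (by linarith)),
      intervalIntegral.integral_const_mul, hsq] at htot
    linarith
  -- lower bound
  have hlower : ff'' t (K + 1) / 24 < ∫ x in K..(K + 1), g x := by
    have h1 : 0 < ∫ x in K..m, (g x - ff'' t (K + 1) / 2 * (x - m) ^ 2) := by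
      apply intervalIntegral.intervalIntegral_pos_of_pos_on
        ((hgInt le_rfl hm1.le hKm.le).sub ((hsqInt K m).const_mul _))
      · intro x hx
        obtain ⟨hxp, hux⟩ := hpt x hx.1.le
        obtain ⟨d, hd, heq⟩ := taylor_left hxp hux hx.2
        obtain ⟨hdp, hud⟩ := hpt d (hx.1.trans hd.1).le
        have hgx : g x = ff'' t d / 2 * (x - m) ^ 2 := by
          rw [hgdef]; simp only; linarith [heq]
        have hlt : ff'' t (K + 1) < ff'' t d :=
          ff''_lt hdp hud (by linarith [hd.2, hm1])
        have hsq' : 0 < (x - m) ^ 2 := by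
          have : x - m ≠ 0 := sub_ne_zero.2 (ne_of_lt hx.2)
          positivity
        rw [hgx]
        have hrw : ff'' t d / 2 * (x - m) ^ 2 - ff'' t (K + 1) / 2 * (x - m) ^ 2
            = (ff'' t d - ff'' t (K + 1)) / 2 * (x - m) ^ 2 := by ring
        rw [hrw]
        exact mul_pos (by linarith : (0:ℝ) < (ff'' t d - ff'' t (K + 1)) / 2) hsq'
      · exact hKm
    have h2 : 0 < ∫ x in m..(K + 1), (g x - ff'' t (K + 1) / 2 * (x - m) ^ 2) := by
      apply intervalIntegral.intervalIntegral_pos_of_pos_on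
        ((hgInt hKm.le le_rfl hm1.le).sub ((hsqInt m (K + 1)).const_mul _))
      · intro x hx
        obtain ⟨d, hd, heq⟩ := taylor_right hmpos hum hx.1
        obtain ⟨hdp, hud⟩ := hpt d (hKm.trans hd.1).le
        have hlt : ff'' t (K + 1) < ff'' t d :=
          ff''_lt hdp hud (hd.2.trans hx.2)
        have hgx : g x = ff'' t d / 2 * (x - m) ^ 2 := by
          rw [hgdef]; simp only; linarith [heq]
        have hsq' : 0 < (x - m) ^ 2 := by
          have : x - m ≠ 0 := sub_ne_zero.2 (ne_of_gt hx.1)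
          positivity
        rw [hgx]
        have hrw : ff'' t d / 2 * (x - m) ^ 2 - ff'' t (K + 1) / 2 * (x - m) ^ 2
            = (ff'' t d - ff'' t (K + 1)) / 2 * (x - m) ^ 2 := by ring
        rw [hrw]
        exact mul_pos (by linarith : (0:ℝ) < (ff'' t d - ff'' t (K + 1)) / 2) hsq'
      · exact hm1
    have hsplit : (∫ x in K..m, (g x - ff'' t (K + 1) / 2 * (x - m) ^ 2))
        + (∫ x in m..(K + 1), (g x - ff'' t (K + 1) / 2 * (x - m) ^ 2))
        = ∫ x in K..(K + 1), (g x - ff'' t (K + 1) / 2 * (x - m) ^ 2) :=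
      intervalIntegral.integral_add_adjacent_intervals
        ((hgInt le_rfl hm1.le hKm.le).sub ((hsqInt K m).const_mul _))
        ((hgInt hKm.le le_rfl hm1.le).sub ((hsqInt m (K + 1)).const_mul _))
    have htot : 0 < ∫ x in K..(K + 1), (g x - ff'' t (K + 1) / 2 * (x - m) ^ 2) := by
      rw [← hsplit]; linarith
    rw [intervalIntegral.integral_sub (hgInt le_rfl le_rfl (by linarith))
      ((hsqInt K (K + 1)).const_mul _),
      intervalIntegral.integral_const_mul, hsq] at htot
    linarith
  -- assemble
  have hshow : (∫ x in K..(K + 1), 1 / (t + Real.log x)) = ∫ x in K..(K + 1), ff t x := rfl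
  have hffm : (1 : ℝ) / (t + Real.log (K + 1/2)) = ff t m := by rw [hmdef, ff]
  have hup2 : ff'' t K / 24 = (1/24) * (1 / (K ^ 2 * (t + Real.log K) ^ 2) +
      2 / (K ^ 2 * (t + Real.log K) ^ 3)) := by rw [ff'']; ring
  have hlo2 : ff'' t (K + 1) / 24 = (1/24) * (1 / ((K + 1) ^ 2 * (t + Real.log (K + 1)) ^ 2) +
      2 / ((K + 1) ^ 2 * (t + Real.log (K + 1)) ^ 3)) := by rw [ff'']; ring
  rw [hshow, hffm]
  constructor
  · rw [← hlo2]; linarith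
  · rw [← hup2]; linarith
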